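/- Let A and E be n×n complex matrices, b an n×1 column vector and c a 1×n row vector, with A·E + E·A = b·c. Set R(x) = exp(−x•A)·E·exp(−x•A). Let μ ∈ ℂ and let I ⊆ ℝ be an open interval on which 1 − μ²·R(x)² is invertible, and define on I the scalar functions v(x) = −c·exp(−x•A)·(1 − μ²R(x)²)⁻¹·exp(−x•A)·b and w(x) = μ·c·exp(−x•A)·(1 − μ²R(x)²)⁻¹·R(x)·exp(−x•A)·b. Then w is differentiable on I and w′(x) = −2μ·v(x)² for all x ∈ I. -/

import Mathlib

open scoped Matrix

namespace GLAux
open NormedSpace Matrix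
attribute [local instance] Matrix.linftyOpSemiNormedRing Matrix.linftyOpNormedRing
  Matrix.linftyOpNormedAlgebra

variable {n : ℕ}

/-- derivative of pointwise `Ring.inverse` -/
lemma hasDerivAt_ring_inverse_comp (N : ℝ → Matrix (Fin n) (Fin n) ℂ)
    (N' : Matrix (Fin n) (Fin n) ℂ) (x : ℝ) (hN : HasDerivAt N N' x) (h : IsUnit (N x)) :
    HasDerivAt (fun y => Ring.inverse (N y))
      (-(Ring.inverse (N x) * N' * Ring.inverse (N x))) x := by
  have h1 := (hasFDerivAt_ringInverse (𝕜 := ℂ) h.unit)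
  rw [h.unit_spec] at h1
  have h2 := (h1.restrictScalars ℝ).comp_hasDerivAt x hN
  convert h2 using 1
  · rfl
  · rfl
  · rfl
  · rfl
  simp [Ring.inverse_unit, ContinuousLinearMap.mulLeftRight_apply, h.unit_spec,
    Matrix.nonsing_inv_eq_ringInverse]

lemma vecMulVec_mulVec' (b c z : Fin n → ℂ) :
    Matrix.vecMulVec b c *ᵥ z = (c ⬝ᵥ z) • b := by
  ext i
  simp only [Matrix.mulVec, Matrix.vecMulVec_apply, dotProduct, Pi.smul_apply,
    smul_eq_mul, Finset.sum_mul]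
  exact Finset.sum_congr rfl fun j _ => by ring

noncomputable def phiL (b c : Fin n → ℂ) : Matrix (Fin n) (Fin n) ℂ →ₗ[ℂ] ℂ where
  toFun M := c ⬝ᵥ M.mulVec b
  map_add' X Y := by simp [Matrix.add_mulVec, dotProduct_add]
  map_smul' r X := by simp [Matrix.smul_mulVec, dotProduct_smul]

noncomputable def phiC (b c : Fin n → ℂ) : Matrix (Fin n) (Fin n) ℂ →L[ℂ] ℂ :=
  (phiL b c).toContinuousLinearMap

lemma phiC_apply (b c : Fin n → ℂ) (M : Matrix (Fin n) (Fin n) ℂ) :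
    phiC b c M = c ⬝ᵥ M.mulVec b := rfl

lemma phi_mul (b c : Fin n → ℂ) (X Y : Matrix (Fin n) (Fin n) ℂ) :
    phiC b c (X * Matrix.vecMulVec b c * Y) = phiC b c X * phiC b c Y := by
  simp only [phiC_apply]
  rw [Matrix.mul_assoc, ← Matrix.mulVec_mulVec, ← Matrix.mulVec_mulVec, vecMulVec_mulVec',
    Matrix.mulVec_smul, dotProduct_smul]
  simp [mul_comm]

set_option maxHeartbeats 2000000 in
/-- The heart of the computation, in the Banach algebra of matrices with the
`L∞`-operator norm. -/
theorem main (A E : Matrix (Fin n) (Fin n) ℂ) (b c : Fin n → ℂ)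
    (hE : A * E + E * A = Matrix.vecMulVec b c)
    (μ : ℂ) (I : Set ℝ) (hI : IsOpen I)
    (G : ℝ → Matrix (Fin n) (Fin n) ℂ)
    (hGeq : G = fun y : ℝ => exp (-(y • A)))
    (R : ℝ → Matrix (Fin n) (Fin n) ℂ)
    (hRdef : ∀ x : ℝ, R x = G x * E * G x)
    (hinv : ∀ x ∈ I, IsUnit (1 - μ ^ 2 • R x ^ 2))
    (v w : ℝ → ℂ)
    (hv : ∀ x ∈ I, v x = -(phiC b c (G x * Ring.inverse (1 - μ ^ 2 • R x ^ 2) * G x)))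
    (hw : ∀ x ∈ I, w x = μ * phiC b c
      (G x * Ring.inverse (1 - μ ^ 2 • R x ^ 2) * R x * G x)) :
    ∀ x ∈ I, HasDerivAt w (-2 * μ * v x ^ 2) x := by
  have hGR : G = fun y : ℝ => exp (y • (-A)) := by
    rw [hGeq]; funext y; rw [smul_neg]
  intro x hx
  -- derivatives of G
  have hGd : HasDerivAt G (-(A * G x)) x := by
    rw [hGR]; have h := hasDerivAt_exp_smul_const' (𝕂 := ℝ) (-A) x; simp [neg_mul] at h ⊢; exact h
  have hGd' : HasDerivAt G (-(G x * A)) x := by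
    rw [hGR]; have h := hasDerivAt_exp_smul_const (𝕂 := ℝ) (-A) x; simp [mul_neg] at h ⊢; exact h
  have com_Ag : A * G x = G x * A := by
    rw [hGR]
    exact ((((Commute.refl A).neg_right).smul_right x).exp_right).eq
  set g := G x with hg
  set r := R x with hrx
  set P := Matrix.vecMulVec b c with hP
  set k := Ring.inverse (1 - μ ^ 2 • r ^ 2) with hk
  have hu : IsUnit (1 - μ ^ 2 • r ^ 2) := hinv x hx
  have hkN : k * (1 - μ ^ 2 • r ^ 2) = 1 := Ring.inverse_mul_cancel _ hu
  have hNk : (1 - μ ^ 2 • r ^ 2) * k = 1 := Ring.mul_inverse_cancel _ hu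
  have com_rk : r * k = k * r := by
    have h1 : Commute r (1 - μ ^ 2 • r ^ 2) := by
      refine (Commute.one_right r).sub_right ?_
      exact ((Commute.refl r).pow_right 2).smul_right _
    calc r * k = (k * (1 - μ ^ 2 • r ^ 2)) * (r * k) := by rw [hkN, one_mul]
      _ = k * ((1 - μ ^ 2 • r ^ 2) * r) * k := by noncomm_ring
      _ = k * (r * (1 - μ ^ 2 • r ^ 2)) * k := by rw [h1.eq]
      _ = (k * r) * ((1 - μ ^ 2 • r ^ 2) * k) := by noncomm_ring
      _ = k * r := by rw [hNk, mul_one]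
  have hr : r = g * E * g := hRdef x
  have hT : A * r + r * A = g * P * g := by
    rw [hr, ← hE]
    calc A * (g * E * g) + g * E * g * A
        = (A * g) * E * g + g * E * (g * A) := by noncomm_ring
      _ = (g * A) * E * g + g * E * (A * g) := by rw [com_Ag]
      _ = g * (A * E + E * A) * g := by noncomm_ring
  -- derivative of R
  have hRd : HasDerivAt R (-(A * r + r * A)) x := by
    have h1 := (hGd.mul_const E).mul hGd'
    have h2 : HasDerivAt R (-(A * g) * E * g + g * E * -(g * A)) x := by
      refine HasDerivAt.congr_of_eventuallyEq h1 ?_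
      exact Filter.Eventually.of_forall fun y => (hRdef y)
    convert h2 using 1
    rw [hr]; noncomm_ring
  -- derivative of N := 1 - μ² R²
  have hNd : HasDerivAt (fun y => 1 - μ ^ 2 • R y ^ 2)
      (-(μ ^ 2 • (-(A * r + r * A) * r + r * -(A * r + r * A)))) x := by
    have h1 : HasDerivAt (fun y => R y ^ 2)
        (-(A * r + r * A) * r + r * -(A * r + r * A)) x := by
      have h := hRd.mul hRd
      simp only [← pow_two] at h
      convert h using 2 <;> rfl
    exact (h1.const_smul (μ ^ 2)).const_sub 1
  -- derivative of K := (1 - μ² R²)⁻¹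
  have hKd : HasDerivAt (fun y => Ring.inverse (1 - μ ^ 2 • R y ^ 2))
      (-(k * -(μ ^ 2 • (-(A * r + r * A) * r + r * -(A * r + r * A))) * k)) x :=
    hasDerivAt_ring_inverse_comp _ _ x hNd hu
  -- derivative of the full product
  set W : Matrix (Fin n) (Fin n) ℂ :=
    ((-(A * g) * k + g * -(k * -(μ ^ 2 • (-(A * r + r * A) * r + r * -(A * r + r * A))) * k))
        * r + (g * k) * -(A * r + r * A)) * g + ((g * k) * r) * -(g * A) with hW
  have hfd : HasDerivAt
      (fun y => G y * Ring.inverse (1 - μ ^ 2 • R y ^ 2) * R y * G y) W x :=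
    ((hGd.mul hKd).mul hRd).mul hGd'
  -- transfer through φ and identify with w
  have hwd : HasDerivAt w (μ * phiC b c W) x := by
    have h1 := ((phiC b c).hasFDerivAt.restrictScalars ℝ).comp_hasDerivAt x hfd
    have h2 : HasDerivAt
        (fun y => μ * phiC b c (G y * Ring.inverse (1 - μ ^ 2 • R y ^ 2) * R y * G y))
        (μ * phiC b c W) x := by
      exact h1.const_mul μ
    refine h2.congr_of_eventuallyEq ?_
    exact (hI.eventually_mem hx).mono fun y hy => (hw y hy)
  -- algebraic simplification of W
  have u2 : (1 - μ ^ 2 • r ^ 2) * (A * r) + (r * A) * (1 - μ ^ 2 • r ^ 2)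
      = (A * r + r * A) - μ ^ 2 • (r * (A * r + r * A) * r) := by
    simp only [sub_mul, mul_sub, one_mul, mul_one, smul_mul_assoc, mul_smul_comm,
      mul_add, add_mul, smul_add, pow_two, mul_assoc]
    abel
  have e2 : A * (k * r) + (k * r) * A
      = k * ((A * r + r * A) - μ ^ 2 • (r * (A * r + r * A) * r)) * k := by
    rw [← u2]
    calc A * (k * r) + (k * r) * A
        = A * (r * k) + k * (r * A) * 1 := by rw [com_rk]; noncomm_ring
      _ = (k * (1 - μ ^ 2 • r ^ 2)) * (A * (r * k)) +
            (k * (r * A)) * ((1 - μ ^ 2 • r ^ 2) * k) := by rw [hkN, hNk]; noncomm_ring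
      _ = k * ((1 - μ ^ 2 • r ^ 2) * (A * r) + (r * A) * (1 - μ ^ 2 • r ^ 2)) * k := by
          noncomm_ring
  have step1 : A * g * (k * r) * g + g * (k * r) * g * A
      = g * (A * (k * r) + (k * r) * A) * g := by
    calc A * g * (k * r) * g + g * (k * r) * g * A
        = (A * g) * ((k * r) * g) + (g * (k * r)) * (g * A) := by noncomm_ring
      _ = (g * A) * ((k * r) * g) + (g * (k * r)) * (A * g) := by rw [com_Ag]
      _ = g * (A * (k * r) + (k * r) * A) * g := by noncomm_ring
  have key : A * g * (k * r) * g + g * (k * r) * g * A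
      = g * (k * (A * r + r * A) * k) * g
        - μ ^ 2 • (g * (k * (r * (A * r + r * A) * r) * k) * g) := by
    rw [step1, e2]
    simp only [mul_sub, sub_mul, mul_smul_comm, smul_mul_assoc, mul_assoc]
  have hW2 : W = -(g * k * (A * r + r * A) * k * g)
      + μ ^ 2 • (g * (k * r) * (A * r + r * A) * (r * k) * g)
      - μ ^ 2 • (g * k * (A * r + r * A) * (r * k * r) * g)
      - μ ^ 2 • (g * (k * r) * (A * r + r * A) * (k * r) * g)
      - g * k * (A * r + r * A) * g := by
    have expand : W = -(A * g * (k * r) * g + g * (k * r) * g * A)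
        - μ ^ 2 • (g * k * ((A * r + r * A) * r + r * (A * r + r * A)) * (k * r) * g)
        - g * k * (A * r + r * A) * g := by
      rw [hW]
      simp only [neg_mul, mul_neg, neg_neg, smul_neg, neg_add, smul_add, smul_sub,
        add_mul, mul_add, sub_mul, mul_sub, smul_mul_assoc, mul_smul_comm, mul_assoc]
      abel
    rw [expand, key]
    simp only [neg_mul, mul_neg, neg_neg, smul_neg, neg_add, smul_add, smul_sub,
      add_mul, mul_add, sub_mul, mul_sub, smul_mul_assoc, mul_smul_comm, mul_assoc]
    abel
  -- rewrite the central factor via the rank-one relation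
  rw [hT] at hW2
  have c1 : g * k * (g * P * g) * k * g = (g * k * g) * P * (g * k * g) := by noncomm_ring
  have c2 : g * (k * r) * (g * P * g) * (r * k) * g
      = (g * k * r * g) * P * (g * k * r * g) := by rw [com_rk]; noncomm_ring
  have c3 : g * k * (g * P * g) * (r * k * r) * g
      = (g * k * g) * P * (g * k * r ^ 2 * g) := by rw [com_rk]; noncomm_ring
  have c4 : g * (k * r) * (g * P * g) * (k * r) * g
      = (g * k * r * g) * P * (g * k * r * g) := by noncomm_ring
  have c5 : g * k * (g * P * g) * g = (g * k * g) * P * (g * g) := by noncomm_ring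
  rw [c1, c2, c3, c4, c5] at hW2
  -- compute φ W
  have hphiW : phiC b c W
      = -(phiC b c (g * k * g) * phiC b c (g * k * g))
        + μ ^ 2 * (phiC b c (g * k * r * g) * phiC b c (g * k * r * g))
        - μ ^ 2 * (phiC b c (g * k * g) * phiC b c (g * k * r ^ 2 * g))
        - μ ^ 2 * (phiC b c (g * k * r * g) * phiC b c (g * k * r * g))
        - phiC b c (g * k * g) * phiC b c (g * g) := by
    rw [hW2, hP]
    simp only [map_add, map_sub, map_neg, _root_.map_smul, phi_mul, smul_eq_mul]
  -- the resolvent identity μ² k r² = k - 1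
  have hkr2 : μ ^ 2 • (k * r ^ 2) = k - 1 := by
    have h := hkN
    rw [mul_sub, mul_one, mul_smul_comm] at h
    rw [← h]; abel
  have hs3 : μ ^ 2 * phiC b c (g * k * r ^ 2 * g)
      = phiC b c (g * k * g) - phiC b c (g * g) := by
    have hm : μ ^ 2 • (g * k * r ^ 2 * g) = g * k * g - g * g := by
      have : μ ^ 2 • (g * k * r ^ 2 * g) = g * (μ ^ 2 • (k * r ^ 2)) * g := by
        simp only [smul_mul_assoc, mul_smul_comm, mul_assoc]
      rw [this, hkr2]; noncomm_ring
    calc μ ^ 2 * phiC b c (g * k * r ^ 2 * g)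
        = phiC b c (μ ^ 2 • (g * k * r ^ 2 * g)) := by rw [_root_.map_smul, smul_eq_mul]
      _ = phiC b c (g * k * g) - phiC b c (g * g) := by rw [hm, map_sub]
  -- final scalar computation
  have hfinal : -2 * μ * v x ^ 2 = μ * phiC b c W := by
    rw [hv x hx, hphiW]
    linear_combination (μ * phiC b c (g * k * g)) * hs3
  rwa [hfinal]

end GLAux

open scoped Matrix
/-- For a finite-dimensional linear system with `AE + EA = bc` and
`R(x) = e^{-xA} E e^{-xA}`, the diagonal entries
`v(x) = -c e^{-xA}(1-μ²R²)⁻¹ e^{-xA} b` and `w(x) = μ c e^{-xA}(1-μ²R²)⁻¹ R e^{-xA} b`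
of the solution of the Gelfand--Levitan equation satisfy `w' = -2 μ v²`
(equation (2.33) within Theorem 2.6 of the paper). -/
theorem diag_entries_w_deriv
    {n : ℕ} (A E : Matrix (Fin n) (Fin n) ℂ) (b c : Fin n → ℂ)
    (hE : A * E + E * A = Matrix.vecMulVec b c)
    (R : ℝ → Matrix (Fin n) (Fin n) ℂ)
    (hRdef : ∀ x : ℝ, R x =
      NormedSpace.exp (-(x • A)) * E * NormedSpace.exp (-(x • A)))
    (μ : ℂ) (I : Set ℝ) (hI : IsOpen I) (hI' : I.OrdConnected)
    (hinv : ∀ x ∈ I, IsUnit (1 - μ ^ 2 • R x ^ 2))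
    (v w : ℝ → ℂ)
    (hv : ∀ x ∈ I, v x = -(c ⬝ᵥ ((NormedSpace.exp (-(x • A))
        * (1 - μ ^ 2 • R x ^ 2)⁻¹ * NormedSpace.exp (-(x • A))).mulVec b)))
    (hw : ∀ x ∈ I, w x = μ * (c ⬝ᵥ ((NormedSpace.exp (-(x • A))
        * (1 - μ ^ 2 • R x ^ 2)⁻¹ * R x * NormedSpace.exp (-(x • A))).mulVec b))) :
    ∀ x ∈ I, HasDerivAt w (-2 * μ * v x ^ 2) x := by
  refine GLAux.main A E b c hE μ I hI
    (fun y => NormedSpace.exp (-(y • A))) rfl R (fun y => hRdef y) hinv v w ?_ ?_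
  · intro x hx
    rw [hv x hx, Matrix.nonsing_inv_eq_ringInverse]
    rfl
  · intro x hx
    rw [hw x hx, Matrix.nonsing_inv_eq_ringInverse]
    rfl
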